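/- For n ≥ k > l ≥ 0, the function (Sₖ/Sₗ)^{1/(k-l)} on the positive cone Γ₊ ⊂ ℝⁿ equals the geometric mean of the quotients S_{j+1}/S_j for j = l,...,k-1, i.e., (Sₖ/Sₗ)^{1/(k-l)} = (∏_{j=l}^{k-1} S_{j+1}/S_j)^{1/(k-l)}, and is concave on Γ₊. -/

import Mathlib

noncomputable section

/-- The open positive cone in `ℝⁿ`. -/
def posCone (n : ℕ) : Set (Fin n → ℝ) := {x | ∀ i, 0 < x i}

/-- The normalized `k`-th elementary symmetric polynomial. -/
def eS (n k : ℕ) (x : Fin n → ℝ) : ℝ :=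
  ((n.choose k : ℝ))⁻¹ * ∑ A ∈ Finset.powersetCard k (Finset.univ : Finset (Fin n)), ∏ i ∈ A, x i

section MLhelpers
open Finset
set_option linter.unusedSectionVars false

variable {ι : Type*} [DecidableEq ι]

def ee (k : ℕ) (A : Finset ι) (x : ι → ℝ) : ℝ :=
  ∑ B ∈ A.powersetCard k, ∏ i ∈ B, x i

lemma ee_zero (A : Finset ι) (x : ι → ℝ) : ee 0 A x = 1 := by
  simp [ee]

lemma ee_one (A : Finset ι) (x : ι → ℝ) : ee 1 A x = ∑ i ∈ A, x i := by
  simp [ee, Finset.powersetCard_one, Finset.sum_map]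

lemma ee_pos {k : ℕ} {A : Finset ι} {x : ι → ℝ} (hk : k ≤ A.card)
    (hx : ∀ i ∈ A, 0 < x i) : 0 < ee k A x := by
  apply Finset.sum_pos
  · intro B hB
    rw [Finset.mem_powersetCard] at hB
    exact Finset.prod_pos fun i hi => hx i (hB.1 hi)
  · exact Finset.powersetCard_nonempty.2 hk

lemma ee_erase {k : ℕ} {A : Finset ι} {i : ι} (hi : i ∈ A) (x : ι → ℝ) :
    ee (k+1) A x = ee (k+1) (A.erase i) x + x i * ee k (A.erase i) x := by
  conv_lhs => rw [ee, ← Finset.insert_erase hi,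
    Finset.powersetCard_succ_insert (Finset.notMem_erase i A)]
  rw [Finset.sum_union]
  · congr 1
    rw [Finset.sum_image]
    · rw [ee, Finset.mul_sum]
      apply Finset.sum_congr rfl
      intro B hB
      rw [Finset.mem_powersetCard] at hB
      rw [Finset.prod_insert (fun h => (Finset.notMem_erase i A) (hB.1 h))]
    · intro B hB C hC h
      rw [Finset.mem_coe, Finset.mem_powersetCard] at hB hC
      have hiB : i ∉ B := fun h => (Finset.notMem_erase i A) (hB.1 h)
      have hiC : i ∉ C := fun h => (Finset.notMem_erase i A) (hC.1 h)
      rw [← Finset.erase_insert hiB, ← Finset.erase_insert hiC, h]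
  · rw [Finset.disjoint_left]
    intro B hB hB'
    rw [Finset.mem_powersetCard] at hB
    rw [Finset.mem_image] at hB'
    obtain ⟨C, hC, rfl⟩ := hB'
    exact (Finset.notMem_erase i A) (hB.1 (Finset.mem_insert_self i C))

lemma sum_erase_ee {k : ℕ} (A : Finset ι) (x : ι → ℝ) :
    ∑ i ∈ A, x i * ee k (A.erase i) x = (k+1 : ℝ) * ee (k+1) A x := by
  have h1 : (k+1 : ℝ) * ee (k+1) A x
      = ∑ B ∈ A.powersetCard (k+1), ∑ i ∈ B, ∏ j ∈ B, x j := by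
    rw [ee, Finset.mul_sum]
    apply Finset.sum_congr rfl
    intro B hB
    rw [Finset.mem_powersetCard] at hB
    rw [Finset.sum_const, hB.2, nsmul_eq_mul]
    push_cast; ring
  rw [h1]
  have h2 : ∀ B ∈ A.powersetCard (k+1), ∑ i ∈ B, ∏ j ∈ B, x j
      = ∑ i ∈ A, if i ∈ B then ∏ j ∈ B, x j else 0 := by
    intro B hB
    rw [Finset.mem_powersetCard] at hB
    rw [Finset.sum_ite_mem, Finset.inter_eq_right.2 hB.1]
  rw [Finset.sum_congr rfl h2, Finset.sum_comm]
  apply Finset.sum_congr rfl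
  intro i hi
  rw [Finset.sum_ite, Finset.sum_const_zero, add_zero, ee, Finset.mul_sum]
  refine Finset.sum_bij' (fun B _ => insert i B) (fun B _ => B.erase i) ?hi ?hj ?li ?ri ?hf
  case hi =>
    intro B hB
    rw [Finset.mem_powersetCard] at hB
    have hiB : i ∉ B := fun h => (Finset.notMem_erase i A) (hB.1 h)
    simp only [Finset.mem_filter, Finset.mem_powersetCard]
    refine ⟨⟨?_, ?_⟩, Finset.mem_insert_self i B⟩
    · exact Finset.insert_subset hi (hB.1.trans (Finset.erase_subset i A))
    · rw [Finset.card_insert_of_notMem hiB, hB.2]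
  case hj =>
    intro B hB
    simp only [Finset.mem_filter, Finset.mem_powersetCard] at hB
    rw [Finset.mem_powersetCard]
    exact ⟨Finset.erase_subset_erase i hB.1.1,
      by rw [Finset.card_erase_of_mem hB.2, hB.1.2]; omega⟩
  case li =>
    intro B hB
    rw [Finset.mem_powersetCard] at hB
    exact Finset.erase_insert fun h => (Finset.notMem_erase i A) (hB.1 h)
  case ri =>
    intro B hB
    simp only [Finset.mem_filter] at hB
    exact Finset.insert_erase hB.2
  case hf =>
    intro B hB
    rw [Finset.mem_powersetCard] at hB
    have hiB : i ∉ B := fun h => (Finset.notMem_erase i A) (hB.1 h)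
    rw [Finset.prod_insert hiB]

lemma key_ineq {a b s t u : ℝ} (ha : 0 < a) (hb : 0 < b) (hs : 0 < s) (ht : 0 < t)
    (hu : s + t ≤ u) : (a+b)^2/((a+b)+u) ≤ a^2/(a+s) + b^2/(b+t) := by
  have h1 : (a+b)^2/((a+b)+u) ≤ (a+b)^2/((a+b)+(s+t)) := by
    apply div_le_div_of_nonneg_left (by positivity) (by positivity) (by linarith)
  refine h1.trans ?_
  rw [div_add_div _ _ (by positivity) (by positivity), div_le_div_iff₀ (by positivity) (by positivity)]
  nlinarith [sq_nonneg (a*t - b*s), mul_pos hs ht, mul_pos ha hb, mul_pos ha ht, mul_pos hb hs]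

lemma ratio_term {a b xi D : ℝ} (ha : 0 < a) (hb : 0 < b) (hxi : 0 < xi)
    (hD : D = a + xi * b) : xi * a / D = xi - xi^2/(xi + a/b) := by
  subst hD
  have h1 : xi + a / b > 0 := by positivity
  field_simp
  ring

lemma ee_ratio_identity {k : ℕ} {A : Finset ι} {x : ι → ℝ} (hA : k + 2 ≤ A.card)
    (hx : ∀ i ∈ A, 0 < x i) :
    ((k:ℝ)+2) * (ee (k+2) A x / ee (k+1) A x)
      = ∑ i ∈ A, (x i - (x i)^2 / (x i + ee (k+1) (A.erase i) x / ee k (A.erase i) x)) := by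
  have hD : (0:ℝ) < ee (k+1) A x := ee_pos (by omega) hx
  have hL : ((k:ℝ)+2) * (ee (k+2) A x / ee (k+1) A x)
      = (∑ i ∈ A, x i * ee (k+1) (A.erase i) x) / ee (k+1) A x := by
    rw [sum_erase_ee A x, ← mul_div_assoc]
    norm_num [show k+1+1 = k+2 from rfl]
    ring_nf
  rw [hL, Finset.sum_div]
  apply Finset.sum_congr rfl
  intro i hi
  have hcard : k + 1 ≤ (A.erase i).card := by
    rw [Finset.card_erase_of_mem hi]; omega
  have hxe : ∀ j ∈ A.erase i, 0 < x j := fun j hj => hx j (Finset.mem_of_mem_erase hj)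
  exact ratio_term (ee_pos hcard hxe) (ee_pos (by omega) hxe) (hx i hi)
    (ee_erase hi x)

lemma ML : ∀ (k : ℕ) (A : Finset ι) (x y : ι → ℝ), k + 1 ≤ A.card →
    (∀ i ∈ A, 0 < x i) → (∀ i ∈ A, 0 < y i) →
    ee (k+1) A x / ee k A x + ee (k+1) A y / ee k A y
      ≤ ee (k+1) A (x+y) / ee k A (x+y) := by
  intro k
  induction k with
  | zero =>
    intro A x y _ _ _
    simp [ee_zero, ee_one, Finset.sum_add_distrib]
  | succ k ih =>
    intro A x y hA hx hy
    have hxy : ∀ i ∈ A, 0 < (x+y) i := fun i hi => add_pos (hx i hi) (hy i hi)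
    have hpos : (0:ℝ) < (k:ℝ) + 2 := by positivity
    rw [← mul_le_mul_iff_right₀ hpos, mul_add,
      ee_ratio_identity hA hx, ee_ratio_identity hA hy, ee_ratio_identity hA hxy,
      ← Finset.sum_add_distrib]
    apply Finset.sum_le_sum
    intro i hi
    have hcard : k + 1 ≤ (A.erase i).card := by
      rw [Finset.card_erase_of_mem hi]; omega
    have hxe : ∀ j ∈ A.erase i, 0 < x j := fun j hj => hx j (Finset.mem_of_mem_erase hj)
    have hye : ∀ j ∈ A.erase i, 0 < y j := fun j hj => hy j (Finset.mem_of_mem_erase hj)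
    have hIH := ih (A.erase i) x y hcard hxe hye
    have hpsx : (0:ℝ) < ee (k+1) (A.erase i) x / ee k (A.erase i) x :=
      div_pos (ee_pos hcard hxe) (ee_pos (by omega) hxe)
    have hpsy : (0:ℝ) < ee (k+1) (A.erase i) y / ee k (A.erase i) y :=
      div_pos (ee_pos hcard hye) (ee_pos (by omega) hye)
    have hxi := hx i hi
    have hyi := hy i hi
    have hkey := key_ineq hxi hyi hpsx hpsy hIH
    simp only [Pi.add_apply]
    linarith [hkey]

lemma ee_smul (k : ℕ) (A : Finset ι) (x : ι → ℝ) (t : ℝ) :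
    ee k A (fun i => t * x i) = t^k * ee k A x := by
  rw [ee, ee, Finset.mul_sum]
  apply Finset.sum_congr rfl
  intro B hB
  rw [Finset.mem_powersetCard] at hB
  rw [Finset.prod_mul_distrib, Finset.prod_const, hB.2]

lemma posConeConvexAux (n : ℕ) : Convex ℝ (posCone n) := by
  intro x hx y hy a b ha hb hab
  intro i
  simp only [Pi.add_apply, Pi.smul_apply, smul_eq_mul]
  rcases eq_or_lt_of_le ha with h|h
  · have hb1 : b = 1 := by linarith
    rw [← h, hb1]; simpa using hy i
  · exact add_pos_of_pos_of_nonneg (mul_pos h (hx i)) (mul_nonneg hb (hy i).le)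

lemma ratio_concave {n : ℕ} {k : ℕ} (h : k + 1 ≤ n) :
    ConcaveOn ℝ (posCone n)
      (fun x => ee (k+1) (Finset.univ : Finset (Fin n)) x / ee k Finset.univ x) := by
  have hcard : k + 1 ≤ (Finset.univ : Finset (Fin n)).card := by
    simpa using h
  refine ⟨posConeConvexAux n, ?_⟩
  intro x hx y hy a b ha hb hab
  simp only [smul_eq_mul]
  rcases eq_or_lt_of_le ha with h0|h0
  · have hb1 : b = 1 := by linarith
    rw [← h0, hb1]; simp
  rcases eq_or_lt_of_le hb with h1|h1
  · have ha1 : a = 1 := by linarith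
    rw [← h1, ha1]; simp
  have hax : ∀ i ∈ (Finset.univ : Finset (Fin n)), 0 < (a • x) i := by
    intro i _; exact mul_pos h0 (hx i)
  have hby : ∀ i ∈ (Finset.univ : Finset (Fin n)), 0 < (b • y) i := by
    intro i _; exact mul_pos h1 (hy i)
  have hML := ML k (Finset.univ : Finset (Fin n)) (a • x) (b • y) hcard hax hby
  have e1 : ∀ (c : ℝ) (z : Fin n → ℝ), 0 < c →
      ee (k+1) (Finset.univ : Finset (Fin n)) (c • z) / ee k Finset.univ (c • z)
        = c * (ee (k+1) Finset.univ z / ee k Finset.univ z) := by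
    intro c z hc
    have : (c • z) = fun i => c * z i := rfl
    have hck : (c:ℝ)^k ≠ 0 := by positivity
    rw [this, ee_smul, ee_smul, mul_div_mul_comm]
    congr 1
    rw [pow_succ]
    field_simp
  rw [e1 a x h0, e1 b y h1] at hML
  exact hML

/-- Core: equal-weight geometric mean is superadditive-ish w.r.t. convex combos. -/
lemma geom_mean_combo {m : ℕ} (T : Finset ℕ) (hT : T.card = m) (hm : 0 < m)
    {a b : ℝ} (ha : 0 < a) (hb : 0 < b) (u v : ℕ → ℝ)
    (hu : ∀ j ∈ T, 0 < u j) (hv : ∀ j ∈ T, 0 < v j) :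
    a * (∏ j ∈ T, u j) ^ ((1:ℝ)/m) + b * (∏ j ∈ T, v j) ^ ((1:ℝ)/m)
      ≤ (∏ j ∈ T, (a * u j + b * v j)) ^ ((1:ℝ)/m) := by
  set w : ℝ := (1:ℝ)/m with hw
  have hw0 : 0 ≤ w := by positivity
  have hq : ∀ j ∈ T, 0 < a * u j + b * v j := fun j hj =>
    add_pos (mul_pos ha (hu j hj)) (mul_pos hb (hv j hj))
  have hG : 0 < (∏ j ∈ T, (a * u j + b * v j)) ^ w :=
    Real.rpow_pos_of_pos (Finset.prod_pos hq) w
  -- rewrite G as product of rpow's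
  have hGprod : (∏ j ∈ T, (a * u j + b * v j)) ^ w
      = ∏ j ∈ T, (a * u j + b * v j) ^ w :=
    (Real.finset_prod_rpow T _ (fun j hj => (hq j hj).le) w).symm
  -- main claim for one side
  have main : ∀ (c : ℝ) (z : ℕ → ℝ), 0 < c → (∀ j ∈ T, 0 < z j) →
      c * (∏ j ∈ T, z j) ^ w
        = (∏ j ∈ T, (c * z j / (a * u j + b * v j)) ^ w)
          * (∏ j ∈ T, (a * u j + b * v j)) ^ w := by
    intro c z hc hz
    rw [hGprod, ← Finset.prod_mul_distrib]
    have : ∀ j ∈ T, (c * z j / (a * u j + b * v j)) ^ w * (a * u j + b * v j) ^ w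
        = c ^ w * z j ^ w := by
      intro j hj
      rw [Real.div_rpow (mul_nonneg hc.le (hz j hj).le) (hq j hj).le,
        div_mul_cancel₀ _ (Real.rpow_pos_of_pos (hq j hj) w).ne',
        Real.mul_rpow hc.le (hz j hj).le]
    rw [Finset.prod_congr rfl this, Finset.prod_mul_distrib, Finset.prod_const, hT,
      ← Real.rpow_natCast (c ^ w) m, ← Real.rpow_mul hc.le]
    have hwm : w * m = 1 := by
      rw [hw]; field_simp
    rw [hwm, Real.rpow_one, Real.finset_prod_rpow T _ (fun j hj => (hz j hj).le) w]
  have amgm : ∀ (c : ℝ) (z : ℕ → ℝ), (∀ j ∈ T, 0 ≤ z j) →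
      ∏ j ∈ T, (z j) ^ w ≤ ∑ j ∈ T, w * z j := by
    intro c z hz
    refine Real.geom_mean_le_arith_mean_weighted T (fun _ => w) z (fun _ _ => hw0) ?_ hz
    rw [Finset.sum_const, hT, nsmul_eq_mul, hw]
    field_simp
  have h1 := main a u ha hu
  have h2 := main b v hb hv
  have g1 := amgm a (fun j => a * u j / (a * u j + b * v j))
    (fun j hj => div_nonneg (mul_nonneg ha.le (hu j hj).le) (hq j hj).le)
  have g2 := amgm b (fun j => b * v j / (a * u j + b * v j))
    (fun j hj => div_nonneg (mul_nonneg hb.le (hv j hj).le) (hq j hj).le)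
  have hsum : (∑ j ∈ T, w * (a * u j / (a * u j + b * v j)))
      + (∑ j ∈ T, w * (b * v j / (a * u j + b * v j))) = 1 := by
    rw [← Finset.sum_add_distrib]
    have : ∀ j ∈ T, w * (a * u j / (a * u j + b * v j))
        + w * (b * v j / (a * u j + b * v j)) = w := by
      intro j hj
      rw [← mul_add, ← add_div, div_self (hq j hj).ne']
      ring
    rw [Finset.sum_congr rfl this, Finset.sum_const, hT, nsmul_eq_mul, hw]
    field_simp
  calc a * (∏ j ∈ T, u j) ^ w + b * (∏ j ∈ T, v j) ^ w
      = ((∏ j ∈ T, (a * u j / (a * u j + b * v j)) ^ w)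
        + (∏ j ∈ T, (b * v j / (a * u j + b * v j)) ^ w))
        * (∏ j ∈ T, (a * u j + b * v j)) ^ w := by rw [add_mul, ← h1, ← h2]
    _ ≤ ((∑ j ∈ T, w * (a * u j / (a * u j + b * v j)))
        + (∑ j ∈ T, w * (b * v j / (a * u j + b * v j))))
        * (∏ j ∈ T, (a * u j + b * v j)) ^ w := by
        apply mul_le_mul_of_nonneg_right (add_le_add g1 g2) hG.le
    _ = (∏ j ∈ T, (a * u j + b * v j)) ^ w := by rw [hsum, one_mul]

lemma concaveOn_congr {E : Type*} [AddCommGroup E] [Module ℝ E] {s : Set E}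
    {f g : E → ℝ} (hg : ConcaveOn ℝ s g) (he : ∀ x ∈ s, f x = g x) :
    ConcaveOn ℝ s f := by
  refine ⟨hg.1, ?_⟩
  intro x hx y hy a b ha hb hab
  rw [he _ hx, he _ hy, he _ (hg.1 hx hy ha hb hab)]
  exact hg.2 hx hy ha hb hab

lemma geom_mean_concave {E : Type*} [AddCommGroup E] [Module ℝ E] {s : Set E}
    (hs : Convex ℝ s) {m : ℕ} (T : Finset ℕ) (hT : T.card = m) (hm : 0 < m)
    (f : ℕ → E → ℝ) (hconc : ∀ j ∈ T, ConcaveOn ℝ s (f j))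
    (hpos : ∀ j ∈ T, ∀ x ∈ s, 0 < f j x) :
    ConcaveOn ℝ s (fun x => (∏ j ∈ T, f j x) ^ ((1:ℝ)/m)) := by
  refine ⟨hs, ?_⟩
  intro x hx y hy a b ha hb hab
  rcases eq_or_lt_of_le ha with h0|h0
  · have hb1 : b = 1 := by linarith
    rw [← h0, hb1]; simp
  rcases eq_or_lt_of_le hb with h1|h1
  · have ha1 : a = 1 := by linarith
    rw [← h1, ha1]; simp
  have hz : a • x + b • y ∈ s := hs hx hy ha hb hab
  have step1 : ∀ j ∈ T, a * f j x + b * f j y ≤ f j (a • x + b • y) := by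
    intro j hj
    have := (hconc j hj).2 hx hy ha hb hab
    simpa [smul_eq_mul] using this
  have hcombo := geom_mean_combo T hT hm h0 h1 (fun j => f j x) (fun j => f j y)
    (fun j hj => hpos j hj x hx) (fun j hj => hpos j hj y hy)
  have h2 : (∏ j ∈ T, (a * f j x + b * f j y)) ^ ((1:ℝ)/m)
      ≤ (∏ j ∈ T, f j (a • x + b • y)) ^ ((1:ℝ)/m) :=
    Real.rpow_le_rpow (Finset.prod_nonneg fun j hj =>
      (add_pos (mul_pos h0 (hpos j hj x hx)) (mul_pos h1 (hpos j hj y hy))).le)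
      (Finset.prod_le_prod (fun j hj =>
        (add_pos (mul_pos h0 (hpos j hj x hx)) (mul_pos h1 (hpos j hj y hy))).le)
        step1) (by positivity)
  exact le_trans (by simpa [smul_eq_mul] using hcombo) (by simpa [one_div] using h2)

lemma telescope {l k : ℕ} (hlk : l ≤ k) (f : ℕ → ℝ) (hf : ∀ j, l ≤ j → j ≤ k → f j ≠ 0) :
    ∏ j ∈ Finset.Ico l k, f (j+1) / f j = f k / f l := by
  induction k with
  | zero =>
    have : l = 0 := Nat.le_zero.mp hlk
    subst this
    simp [div_self (hf 0 le_rfl le_rfl)]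
  | succ k ih =>
    rcases Nat.lt_or_ge l (k+1) with h|h
    · have hlk' : l ≤ k := Nat.lt_succ_iff.mp h
      rw [Finset.prod_Ico_succ_top hlk', ih hlk' (fun j h1 h2 => hf j h1 (h2.trans (Nat.le_succ k)))]
      have e1 := hf k hlk' (Nat.le_succ k)
      have e2 := hf l le_rfl (by omega)
      field_simp
    · have : l = k+1 := le_antisymm hlk h
      subst this
      simp [div_self (hf (k+1) le_rfl le_rfl)]

lemma eS_aux_eq (n j : ℕ) (x : Fin n → ℝ) :
    eS n j x = ((n.choose j : ℝ))⁻¹ * ee j (Finset.univ : Finset (Fin n)) x := rfl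

lemma card_univ_fin (n : ℕ) : (Finset.univ : Finset (Fin n)).card = n := by simp

lemma eS_aux_pos {n j : ℕ} (hj : j ≤ n) {x : Fin n → ℝ} (hx : x ∈ posCone n) :
    0 < eS n j x := by
  rw [eS_aux_eq]
  have h1 : (0:ℝ) < (n.choose j : ℝ) := by
    exact_mod_cast Nat.choose_pos hj
  have h2 : 0 < ee j (Finset.univ : Finset (Fin n)) x :=
    ee_pos (by rw [card_univ_fin]; exact hj) (fun i _ => hx i)
  positivity

lemma eS_aux_ratio_concave {n j : ℕ} (hj : j + 1 ≤ n) :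
    ConcaveOn ℝ (posCone n) (fun x => eS n (j+1) x / eS n j x) := by
  set c : ℝ := ((n.choose (j+1) : ℝ))⁻¹ / ((n.choose j : ℝ))⁻¹ with hc
  have hc0 : 0 ≤ c := by positivity
  have hbase := ratio_concave (n := n) (k := j) hj
  have := hbase.smul hc0
  apply concaveOn_congr this
  intro x _
  simp only [Pi.smul_apply, smul_eq_mul]
  rw [eS_aux_eq, eS_aux_eq, mul_div_mul_comm]


theorem stmt10 {n k l : ℕ} (hl : l < k) (hk : k ≤ n) :
    (∀ x ∈ posCone n,
      (eS n k x / eS n l x) ^ ((1 : ℝ) / ((k : ℝ) - l))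
        = (∏ j ∈ Finset.Ico l k, eS n (j + 1) x / eS n j x) ^ ((1 : ℝ) / ((k : ℝ) - l))) ∧
    ConcaveOn ℝ (posCone n)
      (fun x => (eS n k x / eS n l x) ^ ((1 : ℝ) / ((k : ℝ) - l))) := by
  have hbase : ∀ x ∈ posCone n,
      eS n k x / eS n l x = ∏ j ∈ Finset.Ico l k, eS n (j + 1) x / eS n j x := by
    intro x hx
    exact (telescope hl.le (fun j => eS n j x)
      (fun j h1 h2 => (eS_aux_pos (h2.trans hk) hx).ne')).symm
  have hexp : (1 : ℝ) / ((k : ℝ) - l) = (1 : ℝ) / ((k - l : ℕ) : ℝ) := by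
    rw [Nat.cast_sub hl.le]
  constructor
  · intro x hx
    rw [hbase x hx]
  · have hg : ConcaveOn ℝ (posCone n)
        (fun x => (∏ j ∈ Finset.Ico l k, eS n (j + 1) x / eS n j x)
          ^ ((1 : ℝ) / ((k - l : ℕ) : ℝ))) := by
      apply geom_mean_concave (posConeConvexAux n) (Finset.Ico l k)
        (Nat.card_Ico l k) (by omega) (fun j x => eS n (j+1) x / eS n j x)
      · intro j hj
        rw [Finset.mem_Ico] at hj
        exact eS_aux_ratio_concave (by omega)
      · intro j hj x hx
        rw [Finset.mem_Ico] at hj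
        exact div_pos (eS_aux_pos (by omega) hx) (eS_aux_pos (by omega) hx)
    apply concaveOn_congr hg
    intro x hx
    rw [hbase x hx, hexp]

end MLhelpers
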